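/- If f solves the Blasius equation on [0,∞) with f(0) = f'(0) = 0 and f''(0) > 0, then f(η) > 0 and f'(η) > 0 for all η > 0, and f'' is strictly decreasing on (0,∞). -/

import Mathlib

open Set

/-- If f solves the Blasius equation on [0,∞) with f(0) = f'(0) = 0 and f''(0) > 0, then
f > 0 and f' > 0 on (0,∞), and f'' is strictly decreasing on (0,∞). -/
theorem blasius_positivity (f : ℝ → ℝ)
    (hf : ContDiff ℝ 3 f)
    (hode : ∀ η ∈ Set.Ici (0 : ℝ),
      deriv (deriv (deriv f)) η + (1 / 2) * f η * deriv (deriv f) η = 0)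
    (h0 : f 0 = 0) (h1 : deriv f 0 = 0) (h2 : 0 < deriv (deriv f) 0) :
    (∀ η ∈ Set.Ioi (0 : ℝ), 0 < f η ∧ 0 < deriv f η) ∧
    StrictAntiOn (deriv (deriv f)) (Set.Ioi (0 : ℝ)) := by
  have hf3 : ContDiff ℝ ((2 : ℕ) + 1) f := by exact_mod_cast hf
  have hf' : ContDiff ℝ ((1:ℕ)+1) (deriv f) := by
    have := (contDiff_succ_iff_deriv.mp hf3).2.2
    exact_mod_cast this
  have hf'' : ContDiff ℝ 1 (deriv (deriv f)) := by
    have := (contDiff_succ_iff_deriv.mp hf').2.2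
    exact_mod_cast this
  have hdf : Differentiable ℝ f := (contDiff_succ_iff_deriv.mp hf3).1
  have hdf' : Differentiable ℝ (deriv f) := (contDiff_succ_iff_deriv.mp hf').1
  have hdf'' : Differentiable ℝ (deriv (deriv f)) := hf''.differentiable one_ne_zero
  set g := deriv (deriv f) with hg
  -- F η = ∫₀^η f
  set F : ℝ → ℝ := fun η => ∫ t in (0:ℝ)..η, f t with hF
  have hFd : ∀ η, HasDerivAt F (f η) η := fun η =>
    intervalIntegral.integral_hasDerivAt_right (hdf.continuous.intervalIntegrable _ _)
      (hdf.continuous.stronglyMeasurableAtFilter _ _) hdf.continuous.continuousAt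
  set h : ℝ → ℝ := fun η => g η * Real.exp (F η / 2) with hh
  have hhd : ∀ η, HasDerivAt h
      (deriv g η * Real.exp (F η / 2) + g η * (Real.exp (F η / 2) * (f η / 2))) η := by
    intro η
    exact (hdf''.differentiableAt.hasDerivAt).mul (((hFd η).div_const 2).exp)
  -- deriv h = 0 on Ici 0
  have hderiv0 : ∀ η ∈ Set.Ici (0:ℝ), deriv h η = 0 := by
    intro η hη
    rw [(hhd η).deriv]
    have := hode η hη
    have hdg : deriv g η = -(1/2) * f η * g η := by rw [hg]; linarith
    rw [hdg]; ring
  have hconst : ∀ η ∈ Set.Ici (0:ℝ), h η = h 0 := by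
    intro η hη
    have hcont : ContinuousOn h (Set.Ici 0) := fun x _ => (hhd x).continuousAt.continuousWithinAt
    have hdiff : DifferentiableOn ℝ h (interior (Set.Ici (0:ℝ))) := fun x _ =>
      (hhd x).differentiableAt.differentiableWithinAt
    have hmono := monotoneOn_of_deriv_nonneg (convex_Ici 0) hcont hdiff
      (fun x hx => by rw [hderiv0 x (interior_subset hx)])
    have hanti := antitoneOn_of_deriv_nonpos (convex_Ici 0) hcont hdiff
      (fun x hx => by rw [hderiv0 x (interior_subset hx)])
    exact le_antisymm (hanti Set.self_mem_Ici hη hη) (hmono Set.self_mem_Ici hη hη)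
  have hF0 : F 0 = 0 := by simp [hF]
  have h00 : h 0 = g 0 := by simp [hh, hF0]
  -- g > 0 on Ici 0
  have hgpos : ∀ η ∈ Set.Ici (0:ℝ), 0 < g η := by
    intro η hη
    have hE : 0 < Real.exp (F η / 2) := Real.exp_pos _
    have heq : g η * Real.exp (F η / 2) = g 0 := by
      rw [← h00]; exact hconst η hη
    by_contra hc
    push_neg at hc
    nlinarith [mul_nonneg (neg_nonneg.mpr hc) hE.le]
  -- f' strictly increasing on Ici 0
  have hf'mono : StrictMonoOn (deriv f) (Set.Ici (0:ℝ)) := by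
    apply strictMonoOn_of_deriv_pos (convex_Ici 0) hdf'.continuous.continuousOn
    intro x hx
    rw [interior_Ici] at hx
    exact hgpos x (Set.mem_Ici.mpr (le_of_lt hx))
  have hf'pos : ∀ η ∈ Set.Ioi (0:ℝ), 0 < deriv f η := by
    intro η hη
    have := hf'mono Set.self_mem_Ici (Set.mem_Ici.mpr (le_of_lt hη)) hη
    rwa [h1] at this
  have hfmono : StrictMonoOn f (Set.Ici (0:ℝ)) := by
    apply strictMonoOn_of_deriv_pos (convex_Ici 0) hdf.continuous.continuousOn
    intro x hx
    rw [interior_Ici] at hx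
    exact hf'pos x hx
  have hfpos : ∀ η ∈ Set.Ioi (0:ℝ), 0 < f η := by
    intro η hη
    have := hfmono Set.self_mem_Ici (Set.mem_Ici.mpr (le_of_lt hη)) hη
    rwa [h0] at this
  refine ⟨fun η hη => ⟨hfpos η hη, hf'pos η hη⟩, ?_⟩
  have : StrictAntiOn g (Set.Ici (0:ℝ)) := by
    apply strictAntiOn_of_deriv_neg (convex_Ici 0) hdf''.continuous.continuousOn
    intro x hx
    rw [interior_Ici] at hx
    have hdg : deriv g x = -(1/2) * f x * g x := by
      have := hode x (Set.mem_Ici.mpr (le_of_lt hx)); rw [hg]; linarith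
    rw [hdg]
    have := hfpos x hx
    have := hgpos x (Set.mem_Ici.mpr (le_of_lt hx))
    nlinarith
  exact this.mono (Set.Ioi_subset_Ici le_rfl)
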